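/- arXiv:quant-ph/9601020 — 3 statements merged into one kernel-verified Lean document; each statement's English description precedes it below -/
import Mathlib

section
/- (Helstrom's minimal error probability.) Let ρ0, ρ1 be density matrices on ℂ^D, let π0, π1 ≥ 0 with π0 + π1 = 1, and set Γ = π1 ρ1 − π0 ρ0, a Hermitian matrix with eigenvalues γ_1,…,γ_D. Then π0 + Σ_{j : γ_j ≤ 0} γ_j is the minimum, over all pairs (E0, E1) of positive semidefinite matrices with E0 + E1 = I, of the error probability π0 · Re tr(ρ0 E1) + π1 · Re tr(ρ1 E0): every such pair gives a value ≥ π0 + Σ_{γ_j ≤ 0} γ_j, and some pair achieves this value. -/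
open Matrix
open scoped ComplexOrder

/-- Helstrom's minimal error probability for distinguishing two density matrices. -/
theorem helstrom_minimal_error_probability {D : ℕ}
    (ρ0 ρ1 : Matrix (Fin D) (Fin D) ℂ)
    (hρ0 : ρ0.PosSemidef) (hρ1 : ρ1.PosSemidef)
    (hρ0t : ρ0.trace = 1) (hρ1t : ρ1.trace = 1)
    (π0 π1 : ℝ) (hπ0 : 0 ≤ π0) (hπ1 : 0 ≤ π1) (hπ : π0 + π1 = 1)
    (hΓ : ((π1 : ℂ) • ρ1 - (π0 : ℂ) • ρ0).IsHermitian) :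
    (∀ E0 E1 : Matrix (Fin D) (Fin D) ℂ,
        E0.PosSemidef → E1.PosSemidef → E0 + E1 = 1 →
        π0 + ∑ j ∈ Finset.univ.filter (fun j => hΓ.eigenvalues j ≤ 0), hΓ.eigenvalues j
          ≤ π0 * ((ρ0 * E1).trace).re + π1 * ((ρ1 * E0).trace).re) ∧
    (∃ E0 E1 : Matrix (Fin D) (Fin D) ℂ,
        E0.PosSemidef ∧ E1.PosSemidef ∧ E0 + E1 = 1 ∧
        π0 * ((ρ0 * E1).trace).re + π1 * ((ρ1 * E0).trace).re
          = π0 + ∑ j ∈ Finset.univ.filter (fun j => hΓ.eigenvalues j ≤ 0), hΓ.eigenvalues j) := by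
  set Γ : Matrix (Fin D) (Fin D) ℂ := (π1 : ℂ) • ρ1 - (π0 : ℂ) • ρ0 with hΓdef
  set U : Matrix (Fin D) (Fin D) ℂ := (hΓ.eigenvectorUnitary : Matrix (Fin D) (Fin D) ℂ) with hUdef
  set γ : Fin D → ℝ := hΓ.eigenvalues with hγdef
  have hUU : star U * U = 1 := Unitary.coe_star_mul_self hΓ.eigenvectorUnitary
  have hUU' : U * star U = 1 := Unitary.coe_mul_star_self hΓ.eigenvectorUnitary
  -- conversion of error probability
  have key : ∀ E0 E1 : Matrix (Fin D) (Fin D) ℂ, E0 + E1 = 1 →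
      π0 * ((ρ0 * E1).trace).re + π1 * ((ρ1 * E0).trace).re
        = π0 + ((Γ * E0).trace).re := by
    intro E0 E1 hsum
    have hE1 : E1 = 1 - E0 := eq_sub_of_add_eq' hsum
    subst hE1
    have h0 : (ρ0 * (1 - E0)).trace = 1 - (ρ0 * E0).trace := by
      rw [mul_sub, mul_one, Matrix.trace_sub, hρ0t]
    have hΓE : (Γ * E0).trace
        = (π1 : ℂ) * (ρ1 * E0).trace - (π0 : ℂ) * (ρ0 * E0).trace := by
      rw [hΓdef, sub_mul, smul_mul_assoc, smul_mul_assoc, Matrix.trace_sub,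
        Matrix.trace_smul, Matrix.trace_smul, smul_eq_mul, smul_eq_mul]
    rw [h0, hΓE, Complex.sub_re, Complex.sub_re, Complex.one_re,
      Complex.re_ofReal_mul, Complex.re_ofReal_mul]
    ring
  -- trace formula via spectral theorem
  have htr : ∀ E : Matrix (Fin D) (Fin D) ℂ,
      ((Γ * E).trace).re = ∑ j, γ j * ((star U * E * U) j j).re := by
    intro E
    have h1 : Γ * E = U * (diagonal (Complex.ofReal ∘ γ) * (star U * E)) := by
      conv_lhs => rw [hΓ.spectral_theorem]
      simp only [Unitary.conjStarAlgAut_apply, mul_assoc, hUdef, hγdef]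
      rfl
    rw [h1, Matrix.trace_mul_comm, mul_assoc]
    have h2 : (diagonal (Complex.ofReal ∘ γ) * (star U * E * U)).trace
        = ∑ j, (γ j : ℂ) * (star U * E * U) j j := by
      simp [Matrix.trace, Matrix.diag, Matrix.diagonal_mul]
    rw [h2, Complex.re_sum]
    exact Finset.sum_congr rfl fun j _ => Complex.re_ofReal_mul _ _
  have diag_nonneg : ∀ (F : Matrix (Fin D) (Fin D) ℂ), F.PosSemidef → ∀ j, 0 ≤ F j j := by
    intro F hF j
    exact hF.diag_nonneg
  constructor
  · -- lower bound
    intro E0 E1 hE0 hE1 hsum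
    rw [key E0 E1 hsum, htr E0]
    set F : Matrix (Fin D) (Fin D) ℂ := star U * E0 * U with hFdef
    have hF : F.PosSemidef := by
      rw [hFdef, Matrix.star_eq_conjTranspose]
      exact hE0.conjTranspose_mul_mul_same U
    have hF1 : (1 - F).PosSemidef := by
      have : (1 : Matrix (Fin D) (Fin D) ℂ) - F = star U * E1 * U := by
        have : star U * E1 * U + F = 1 := by
          rw [hFdef]
          calc star U * E1 * U + star U * E0 * U = star U * (E1 + E0) * U := by
                noncomm_ring
            _ = 1 := by rw [add_comm E1 E0, hsum, mul_one, hUU]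
        linear_combination (norm := noncomm_ring) -this
      rw [this, Matrix.star_eq_conjTranspose]
      exact hE1.conjTranspose_mul_mul_same U
    have hr0 : ∀ j, 0 ≤ (F j j).re := fun j => (Complex.le_def.mp (diag_nonneg F hF j)).1
    have hr1 : ∀ j, (F j j).re ≤ 1 := by
      intro j
      have := (Complex.le_def.mp (diag_nonneg _ hF1 j)).1
      simp only [Matrix.sub_apply, Matrix.one_apply_eq, Complex.sub_re, Complex.one_re,
        Complex.zero_re] at this
      linarith
    have : ∑ j ∈ Finset.univ.filter (fun j => γ j ≤ 0), γ j
        ≤ ∑ j, γ j * (F j j).re := by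
      rw [Finset.sum_filter]
      apply Finset.sum_le_sum
      intro j _
      by_cases h : γ j ≤ 0
      · simp only [h, if_true]
        nlinarith [hr0 j, hr1 j]
      · simp only [h, if_false]
        nlinarith [hr0 j, hr1 j]
    linarith
  · -- attainment
    set a : Fin D → ℂ := fun j => if γ j ≤ 0 then 1 else 0 with hadef
    set b : Fin D → ℂ := fun j => if γ j ≤ 0 then 0 else 1 with hbdef
    have hab : diagonal a + diagonal b = (1 : Matrix (Fin D) (Fin D) ℂ) := by
      have hfun : ∀ j, a j + b j = 1 := fun j => by
        by_cases h : γ j ≤ 0 <;> simp [hadef, hbdef, h]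
      rw [Matrix.diagonal_add,
        show (fun i => a i + b i) = fun _ => (1 : ℂ) from funext hfun, Matrix.diagonal_one]
    have hsum1 : U * diagonal a * star U + U * diagonal b * star U = 1 := by
      calc U * diagonal a * star U + U * diagonal b * star U
          = U * (diagonal a + diagonal b) * star U := by noncomm_ring
        _ = 1 := by rw [hab, mul_one, hUU']
    refine ⟨U * diagonal a * star U, U * diagonal b * star U, ?_, ?_, hsum1, ?_⟩
    · rw [Matrix.star_eq_conjTranspose]
      exact (Matrix.posSemidef_diagonal_iff.mpr fun j => by
        by_cases h : γ j ≤ 0 <;> simp [hadef, h]).mul_mul_conjTranspose_same U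
    · rw [Matrix.star_eq_conjTranspose]
      exact (Matrix.posSemidef_diagonal_iff.mpr fun j => by
        by_cases h : γ j ≤ 0 <;> simp [hbdef, h]).mul_mul_conjTranspose_same U
    · rw [key _ _ hsum1, htr]
      have hFa : star U * (U * diagonal a * star U) * U = diagonal a := by
        calc star U * (U * diagonal a * star U) * U
            = (star U * U) * diagonal a * (star U * U) := by noncomm_ring
          _ = diagonal a := by rw [hUU, one_mul, mul_one]
      rw [hFa]
      rw [Finset.sum_filter]
      congr 1
      apply Finset.sum_congr rfl
      intro j _
      by_cases h : γ j ≤ 0 <;> simp [hadef, h, Matrix.diagonal_apply_eq]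
end

section
/- Let ρ0, ρ1 be density matrices on ℂ^D and let {E_b}_{b=1}^n be a POVM. Then Σ_{b=1}^n √(Re tr(ρ0 E_b)) · √(Re tr(ρ1 E_b)) ≥ tr √(ρ1^{1/2} ρ0 ρ1^{1/2}). That is, the statistical overlap of the outcome distributions of any quantum measurement is bounded below by the quantum fidelity tr √(ρ1^{1/2} ρ0 ρ1^{1/2}). -/
open Matrix
open scoped ComplexOrder

namespace Matrix.PosSemidef

/-- The old Mathlib `Matrix.PosSemidef.sqrt` (removed upstream), with its original definition. -/
noncomputable def sqrt {n : Type*} [Fintype n] [DecidableEq n] {A : Matrix n n ℂ}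
    (hA : A.PosSemidef) : Matrix n n ℂ :=
  hA.1.eigenvectorUnitary.1 * diagonal ((↑) ∘ (√·) ∘ hA.1.eigenvalues) *
  (star hA.1.eigenvectorUnitary : Matrix n n ℂ)

lemma posSemidef_sqrt {n : Type*} [Fintype n] [DecidableEq n] {A : Matrix n n ℂ}
    (hA : A.PosSemidef) : PosSemidef hA.sqrt := by
  unfold sqrt
  have h := PosSemidef.mul_mul_conjTranspose_same
    (posSemidef_diagonal_iff (d := (Complex.ofReal ∘ (√·) ∘ hA.1.eigenvalues)).mpr fun i =>
      Complex.zero_le_real.mpr (Real.sqrt_nonneg _))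
    (hA.1.eigenvectorUnitary.1 : Matrix n n ℂ)
  simpa [Matrix.star_eq_conjTranspose] using h

end Matrix.PosSemidef

/-- The sandwiched matrix `ρ1^{1/2} ρ0 ρ1^{1/2}` is positive semidefinite. -/
noncomputable def sandwichPosSemidef {D : ℕ} {ρ0 ρ1 : Matrix (Fin D) (Fin D) ℂ}
    (hρ0 : ρ0.PosSemidef) (hρ1 : ρ1.PosSemidef) :
    (hρ1.sqrt * ρ0 * hρ1.sqrt).PosSemidef := by
  have h := hρ0.mul_mul_conjTranspose_same hρ1.sqrt
  rwa [hρ1.posSemidef_sqrt.isHermitian.eq] at h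

lemma Matrix.PosSemidef.sqrt_mul_self {n : Type*} [Fintype n] [DecidableEq n]
    {A : Matrix n n ℂ} (hA : A.PosSemidef) : hA.sqrt * hA.sqrt = A := by
  have hU : (star hA.1.eigenvectorUnitary : Matrix n n ℂ) * hA.1.eigenvectorUnitary.1 = 1 :=
    (Matrix.mem_unitaryGroup_iff').mp hA.1.eigenvectorUnitary.2
  have hs := hA.1.spectral_theorem
  rw [Unitary.conjStarAlgAut_apply] at hs
  unfold Matrix.PosSemidef.sqrt
  conv_rhs => rw [hs]
  calc _ = (hA.1.eigenvectorUnitary.1 * diagonal ((↑) ∘ (√·) ∘ hA.1.eigenvalues)) *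
        ((star hA.1.eigenvectorUnitary : Matrix n n ℂ) * hA.1.eigenvectorUnitary.1) *
        (diagonal ((↑) ∘ (√·) ∘ hA.1.eigenvalues) *
        (star hA.1.eigenvectorUnitary : Matrix n n ℂ)) := by simp only [mul_assoc]
    _ = _ := by
      rw [hU, mul_one]
      simp only [← mul_assoc]
      rw [mul_assoc _ (diagonal _) (diagonal _), diagonal_mul_diagonal]
      congr 3
      funext i
      simp [← Complex.ofReal_mul, Real.mul_self_sqrt (hA.eigenvalues_nonneg i)]

private lemma psd_trace_nonneg' {D : ℕ} {R : Matrix (Fin D) (Fin D) ℂ} (hR : R.PosSemidef) :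
    0 ≤ R.trace := by
  rw [Matrix.trace]
  refine Finset.sum_nonneg fun i _ => ?_
  have h := hR.diag_nonneg (i := i)
  simpa [Matrix.diag] using h

private lemma psd_mul_trace_nonneg' {D : ℕ} {R Q : Matrix (Fin D) (Fin D) ℂ}
    (hR : R.PosSemidef) (hQ : Q.PosSemidef) : 0 ≤ (R * Q).trace := by
  have h1 : R * Q = hR.sqrt * hR.sqrt * Q := by rw [hR.sqrt_mul_self]
  have h2 : (hR.sqrt * hR.sqrt * Q).trace = (hR.sqrt * Q * hR.sqrt).trace := by
    rw [Matrix.trace_mul_cycle, Matrix.trace_mul_cycle]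
  have h3 : (hR.sqrt * Q * hR.sqrt).PosSemidef := by
    have := hQ.mul_mul_conjTranspose_same hR.sqrt
    rwa [hR.posSemidef_sqrt.isHermitian.eq] at this
  rw [h1, h2]
  exact psd_trace_nonneg' h3

private lemma psd_mul_trace_mono' {D : ℕ} {R Q : Matrix (Fin D) (Fin D) ℂ}
    (hR : R.PosSemidef) (h1Q : ((1 : Matrix (Fin D) (Fin D) ℂ) - Q).PosSemidef) :
    (R * Q).trace.re ≤ R.trace.re := by
  have h : 0 ≤ (R * (1 - Q)).trace := psd_mul_trace_nonneg' hR h1Q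
  have he : (R * (1 - Q)).trace = R.trace - (R * Q).trace := by
    rw [mul_sub, mul_one, Matrix.trace_sub]
  rw [he] at h
  have h2 : (0:ℝ) ≤ (R.trace - (R * Q).trace).re := (RCLike.nonneg_iff.mp h).1
  simp only [Complex.sub_re] at h2
  linarith

private lemma trace_inner_eq' {D : ℕ} (X Y : Matrix (Fin D) (Fin D) ℂ) :
    (Xᴴ * Y).trace = inner (𝕜 := ℂ)
      ((WithLp.equiv 2 (Fin D × Fin D → ℂ)).symm (fun p => X p.1 p.2))
      ((WithLp.equiv 2 (Fin D × Fin D → ℂ)).symm (fun p => Y p.1 p.2)) := by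
  simp only [PiLp.inner_apply, RCLike.inner_apply, Matrix.trace, Matrix.diag,
    Matrix.mul_apply, Matrix.conjTranspose_apply, Fintype.sum_prod_type,
    WithLp.equiv_symm_apply]
  rw [Finset.sum_comm]
  simp [mul_comm]

/-- Cauchy–Schwarz for the Frobenius inner product on matrices. -/
private lemma trace_cs' {D : ℕ} (X Y : Matrix (Fin D) (Fin D) ℂ) :
    ‖(Xᴴ * Y).trace‖ ≤ Real.sqrt ((Xᴴ * X).trace.re) * Real.sqrt ((Yᴴ * Y).trace.re) := by
  set x : EuclideanSpace ℂ (Fin D × Fin D) :=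
    (WithLp.equiv 2 (Fin D × Fin D → ℂ)).symm (fun p => X p.1 p.2) with hxdef
  set y : EuclideanSpace ℂ (Fin D × Fin D) :=
    (WithLp.equiv 2 (Fin D × Fin D → ℂ)).symm (fun p => Y p.1 p.2) with hydef
  have hx : Real.sqrt ((Xᴴ * X).trace.re) = ‖x‖ := by
    have h1 := trace_inner_eq' X X
    rw [← hxdef] at h1
    have h2 : (inner (𝕜 := ℂ) x x).re = ‖x‖ ^ 2 := by
      rw [← RCLike.re_to_complex]; exact inner_self_eq_norm_sq x
    rw [h1, h2]
    exact Real.sqrt_sq (norm_nonneg x)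
  have hy : Real.sqrt ((Yᴴ * Y).trace.re) = ‖y‖ := by
    have h1 := trace_inner_eq' Y Y
    rw [← hydef] at h1
    have h2 : (inner (𝕜 := ℂ) y y).re = ‖y‖ ^ 2 := by
      rw [← RCLike.re_to_complex]; exact inner_self_eq_norm_sq y
    rw [h1, h2]
    exact Real.sqrt_sq (norm_nonneg y)
  have h1 := trace_inner_eq' X Y
  rw [← hxdef, ← hydef] at h1
  rw [h1, hx, hy]
  exact norm_inner_le_norm x y

private lemma aux_overlap {D n : ℕ}
    (ρ0 ρ1 M S0 S1 : Matrix (Fin D) (Fin D) ℂ) (hM : M.PosSemidef)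
    (hS0h : S0ᴴ = S0) (hS1h : S1ᴴ = S1)
    (hS0m : S0 * S0 = ρ0) (hS1m : S1 * S1 = ρ1)
    (hMeq : M = S1 * ρ0 * S1)
    (E : Fin n → Matrix (Fin D) (Fin D) ℂ)
    (hE : ∀ b, (E b).PosSemidef) (hEsum : ∑ b, E b = 1) :
    hM.sqrt.trace.re
      ≤ ∑ b, Real.sqrt (((ρ0 * E b).trace).re) * Real.sqrt (((ρ1 * E b).trace).re) := by
  classical
  subst hMeq
  set V : Matrix (Fin D) (Fin D) ℂ := (hM.1.eigenvectorUnitary : Matrix (Fin D) (Fin D) ℂ)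
    with hVdef
  set lam := hM.1.eigenvalues with hlamdef
  have hlam0 : ∀ i, 0 ≤ lam i := hM.eigenvalues_nonneg
  have hP : hM.sqrt = V * diagonal (fun i => ((Real.sqrt (lam i) : ℝ) : ℂ)) * Vᴴ := rfl
  have hV1 : Vᴴ * V = 1 := by
    have h := hM.1.eigenvectorUnitary.2
    rw [Matrix.mem_unitaryGroup_iff'] at h
    rwa [Matrix.star_eq_conjTranspose] at h
  have hV2 : V * Vᴴ = 1 := by
    have h := hM.1.eigenvectorUnitary.2
    rw [Matrix.mem_unitaryGroup_iff] at h
    rwa [Matrix.star_eq_conjTranspose] at h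
  have hspec : S1 * ρ0 * S1 = V * diagonal (fun i => ((lam i : ℝ) : ℂ)) * Vᴴ :=
    by have hs := hM.1.spectral_theorem; rw [Unitary.conjStarAlgAut_apply] at hs; exact hs
  clear_value V lam
  -- the partial isometry data
  set g : Fin D → ℝ := fun i => if lam i = 0 then 0 else (Real.sqrt (lam i))⁻¹ with hgdef
  set h : Fin D → ℝ := fun i => if lam i = 0 then 0 else 1 with hhdef
  have hsq_ne : ∀ i, lam i ≠ 0 → Real.sqrt (lam i) ≠ 0 := fun i hi =>
    Real.sqrt_ne_zero'.mpr (lt_of_le_of_ne (hlam0 i) (Ne.symm hi))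
  have hgl : ∀ i, g i * lam i = Real.sqrt (lam i) := by
    intro i
    by_cases hi : lam i = 0
    · simp [hgdef, hi]
    · rw [hgdef]
      simp only [hi, if_false]
      rw [inv_mul_eq_div, div_eq_iff (hsq_ne i hi)]
      exact (Real.mul_self_sqrt (hlam0 i)).symm
  have hsg : ∀ i, Real.sqrt (lam i) * g i = h i := by
    intro i
    by_cases hi : lam i = 0
    · simp [hgdef, hhdef, hi]
    · rw [hgdef, hhdef]
      simp only [hi, if_false]
      exact mul_inv_cancel₀ (hsq_ne i hi)
  set A : Matrix (Fin D) (Fin D) ℂ := S0 * S1 with hAdef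
  have hAH : Aᴴ = S1 * S0 := by rw [hAdef, conjTranspose_mul, hS0h, hS1h]
  have hAA : Aᴴ * A = S1 * ρ0 * S1 := by
    rw [hAH, hAdef, ← hS0m]; simp only [mul_assoc]
  set Dg : Matrix (Fin D) (Fin D) ℂ := diagonal (fun i => ((g i : ℝ) : ℂ)) with hDgdef
  have hDgH : Dgᴴ = Dg := by
    rw [hDgdef, Matrix.diagonal_conjTranspose]
    refine congrArg diagonal (funext fun i => ?_)
    simp [Complex.conj_ofReal]
  set W : Matrix (Fin D) (Fin D) ℂ := A * V * Dg with hWdef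
  clear_value A Dg W
  have hWH : Wᴴ = Dg * Vᴴ * Aᴴ := by
    rw [hWdef, conjTranspose_mul, conjTranspose_mul, hDgH, mul_assoc]
  have hdiag : Vᴴ * (S1 * ρ0 * S1) * V = diagonal (fun i => ((lam i : ℝ) : ℂ)) := by
    rw [hspec]
    simp only [← mul_assoc]
    rw [hV1, one_mul, mul_assoc, hV1, mul_one]
  have hVM : Vᴴ * (S1 * ρ0 * S1) = diagonal (fun i => ((lam i : ℝ) : ℂ)) * Vᴴ := by
    calc Vᴴ * (S1 * ρ0 * S1) = Vᴴ * (S1 * ρ0 * S1) * (V * Vᴴ) := by rw [hV2, mul_one]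
    _ = (Vᴴ * (S1 * ρ0 * S1) * V) * Vᴴ := by simp only [mul_assoc]
    _ = diagonal (fun i => ((lam i : ℝ) : ℂ)) * Vᴴ := by rw [hdiag]
  have hWA : Wᴴ * A = diagonal (fun i => ((Real.sqrt (lam i) : ℝ) : ℂ)) * Vᴴ := by
    rw [hWH]
    calc Dg * Vᴴ * Aᴴ * A = Dg * (Vᴴ * (Aᴴ * A)) := by simp only [mul_assoc]
    _ = Dg * (diagonal (fun i => ((lam i : ℝ) : ℂ)) * Vᴴ) := by rw [hAA, hVM]
    _ = (Dg * diagonal (fun i => ((lam i : ℝ) : ℂ))) * Vᴴ := by rw [mul_assoc]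
    _ = diagonal (fun i => ((Real.sqrt (lam i) : ℝ) : ℂ)) * Vᴴ := by
        rw [hDgdef, Matrix.diagonal_mul_diagonal]
        refine congrArg (· * Vᴴ) (congrArg diagonal (funext fun i => ?_))
        rw [← hgl i]
        push_cast
        ring
  set B : Matrix (Fin D) (Fin D) ℂ := V * Wᴴ with hBdef
  clear_value B
  have hPBA : hM.sqrt = B * A := by
    rw [hP, hBdef, mul_assoc V Wᴴ A, hWA, mul_assoc]
  have hWW : Wᴴ * W = diagonal (fun i => ((h i : ℝ) : ℂ)) := by
    have hpt : ∀ i, g i * lam i * g i = h i := fun i => by rw [hgl i, hsg i]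
    rw [hWH, hWdef]
    calc Dg * Vᴴ * Aᴴ * (A * V * Dg)
        = Dg * (Vᴴ * (Aᴴ * A) * V) * Dg := by simp only [mul_assoc]
      _ = Dg * (Vᴴ * (S1 * ρ0 * S1) * V) * Dg := by rw [hAA]
      _ = Dg * diagonal (fun i => ((lam i : ℝ) : ℂ)) * Dg := by rw [hdiag]
      _ = diagonal (fun i => ((h i : ℝ) : ℂ)) := by
          rw [hDgdef, Matrix.diagonal_mul_diagonal, Matrix.diagonal_mul_diagonal]
          refine congrArg diagonal (funext fun i => ?_)
          rw [← hpt i]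
          push_cast
          ring
  have hBB : B * Bᴴ = V * diagonal (fun i => ((h i : ℝ) : ℂ)) * Vᴴ := by
    rw [hBdef, conjTranspose_mul V Wᴴ, conjTranspose_conjTranspose W]
    calc V * Wᴴ * (W * Vᴴ) = V * (Wᴴ * W) * Vᴴ := by simp only [mul_assoc]
    _ = V * diagonal (fun i => ((h i : ℝ) : ℂ)) * Vᴴ := by rw [hWW]
  have h1BB : ((1 : Matrix (Fin D) (Fin D) ℂ) - B * Bᴴ).PosSemidef := by
    have hone : (1 : Matrix (Fin D) (Fin D) ℂ) = V * 1 * Vᴴ := by rw [mul_one, hV2]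
    have heq : (1 : Matrix (Fin D) (Fin D) ℂ) - B * Bᴴ
        = V * diagonal (fun i => ((1 - h i : ℝ) : ℂ)) * Vᴴ := by
      rw [hBB]
      conv_lhs => rw [hone]
      have : (1 : Matrix (Fin D) (Fin D) ℂ) = diagonal (fun _ => (1:ℂ)) := by
        rw [Matrix.diagonal_one]
      rw [this]
      calc V * diagonal (fun _ => (1:ℂ)) * Vᴴ - V * diagonal (fun i => ((h i : ℝ) : ℂ)) * Vᴴ
          = V * (diagonal (fun _ => (1:ℂ)) - diagonal (fun i => ((h i : ℝ) : ℂ))) * Vᴴ := by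
            rw [mul_sub, sub_mul]
      _ = V * diagonal (fun i => ((1 - h i : ℝ) : ℂ)) * Vᴴ := by
            rw [Matrix.diagonal_sub]
            refine congrArg (· * Vᴴ) (congrArg (V * ·) (congrArg diagonal (funext fun i => ?_)))
            push_cast
            ring
    rw [heq]
    have hdpsd : (diagonal (fun i => ((1 - h i : ℝ) : ℂ))).PosSemidef := by
      refine Matrix.posSemidef_diagonal_iff.mpr fun i => ?_
      have hr : (0:ℝ) ≤ 1 - h i := by
        rw [hhdef]; by_cases hi : lam i = 0 <;> simp [hi]
      rw [RCLike.nonneg_iff]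
      exact ⟨by simpa using hr, by simp⟩
    exact hdpsd.mul_mul_conjTranspose_same V
  -- decompose the trace over the POVM
  have hsplit : hM.sqrt.trace = ∑ b, (B * (S0 * (E b * S1))).trace := by
    rw [hPBA]
    have : B * A = ∑ b, B * (S0 * (E b * S1)) := by
      have h1 : ∑ b, B * (S0 * (E b * S1)) = B * (S0 * ((∑ b, E b) * S1)) := by
        rw [Finset.sum_mul, Finset.mul_sum, Finset.mul_sum]
      rw [h1, hEsum, one_mul, hAdef]
    rw [this, Matrix.trace_sum]
  -- per-outcome bound
  have hbound : ∀ b, (B * (S0 * (E b * S1))).trace.re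
      ≤ Real.sqrt (((ρ0 * E b).trace).re) * Real.sqrt (((ρ1 * E b).trace).re) := by
    intro b
    set F : Matrix (Fin D) (Fin D) ℂ := (hE b).sqrt with hFdef
    have hFh : Fᴴ = F := (hE b).posSemidef_sqrt.isHermitian.eq
    have hFm : F * F = E b := (hE b).sqrt_mul_self
    clear_value F
    set X : Matrix (Fin D) (Fin D) ℂ := F * S0 with hXdef
    set Y : Matrix (Fin D) (Fin D) ℂ := F * (S1 * B) with hYdef
    clear_value X Y
    have htb : (B * (S0 * (E b * S1))).trace = (Xᴴ * Y).trace := by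
      rw [Matrix.trace_mul_comm]
      congr 1
      rw [hXdef, hYdef, conjTranspose_mul, hFh, hS0h, ← hFm]
      simp only [mul_assoc]
    have hXX : (Xᴴ * X).trace = (ρ0 * E b).trace := by
      have h1 : Xᴴ * X = S0 * E b * S0 := by
        rw [hXdef, conjTranspose_mul, hFh, hS0h, ← hFm]; simp only [mul_assoc]
      rw [h1, Matrix.trace_mul_cycle, hS0m]
    have hYY : (Yᴴ * Y).trace.re ≤ ((ρ1 * E b).trace).re := by
      have h1 : Yᴴ * Y = Bᴴ * (S1 * E b * S1) * B := by
        rw [hYdef, conjTranspose_mul, conjTranspose_mul, hFh, hS1h, ← hFm]; simp only [mul_assoc]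
      have h2 : (Yᴴ * Y).trace = ((S1 * E b * S1) * (B * Bᴴ)).trace := by
        rw [h1, Matrix.trace_mul_cycle, Matrix.trace_mul_comm]
      have h3 : (S1 * E b * S1).PosSemidef := by
        have := (hE b).mul_mul_conjTranspose_same S1
        rwa [hS1h] at this
      have h4 := psd_mul_trace_mono' h3 h1BB
      have h5 : (S1 * E b * S1).trace = (ρ1 * E b).trace := by
        rw [Matrix.trace_mul_cycle, hS1m]
      rw [h2]
      rw [h5] at h4
      exact h4
    calc (B * (S0 * (E b * S1))).trace.re = (Xᴴ * Y).trace.re := by rw [htb]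
    _ ≤ ‖(Xᴴ * Y).trace‖ := Complex.re_le_norm _
    _ ≤ Real.sqrt ((Xᴴ * X).trace.re) * Real.sqrt ((Yᴴ * Y).trace.re) := trace_cs' X Y
    _ ≤ Real.sqrt (((ρ0 * E b).trace).re) * Real.sqrt (((ρ1 * E b).trace).re) := by
        rw [hXX]
        exact mul_le_mul_of_nonneg_left (Real.sqrt_le_sqrt hYY) (Real.sqrt_nonneg _)
  calc hM.sqrt.trace.re = (∑ b, (B * (S0 * (E b * S1))).trace).re := by rw [hsplit]
  _ = ∑ b, (B * (S0 * (E b * S1))).trace.re := Complex.re_sum _ _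
  _ ≤ ∑ b, Real.sqrt (((ρ0 * E b).trace).re) * Real.sqrt (((ρ1 * E b).trace).re) :=
      Finset.sum_le_sum fun b _ => hbound b

/-- The statistical overlap of the outcome distributions of any POVM measurement on
two density matrices is bounded below by the quantum fidelity
`tr √(ρ1^{1/2} ρ0 ρ1^{1/2})`. -/
theorem statistical_overlap_ge_fidelity {D n : ℕ}
    (ρ0 ρ1 : Matrix (Fin D) (Fin D) ℂ)
    (hρ0 : ρ0.PosSemidef) (hρ1 : ρ1.PosSemidef)
    (hρ0t : ρ0.trace = 1) (hρ1t : ρ1.trace = 1)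
    (E : Fin n → Matrix (Fin D) (Fin D) ℂ)
    (hE : ∀ b, (E b).PosSemidef) (hEsum : ∑ b, E b = 1) :
    ((sandwichPosSemidef hρ0 hρ1).sqrt).trace.re
      ≤ ∑ b, Real.sqrt (((ρ0 * E b).trace).re) * Real.sqrt (((ρ1 * E b).trace).re) :=
  aux_overlap ρ0 ρ1 _ hρ0.sqrt hρ1.sqrt (sandwichPosSemidef hρ0 hρ1)
    hρ0.posSemidef_sqrt.isHermitian.eq hρ1.posSemidef_sqrt.isHermitian.eq
    hρ0.sqrt_mul_self hρ1.sqrt_mul_self rfl E hE hEsum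
end

section
/- Let ψ_1,…,ψ_D be linearly independent vectors in ℂ^D and let α_1,…,α_D be strictly positive real numbers such that Σ_{b=1}^D α_b |ψ_b⟩⟨ψ_b| = I (where |ψ_b⟩⟨ψ_b| denotes the rank-one matrix x ↦ ⟨ψ_b, x⟩ ψ_b). Then the vectors ψ_b are mutually orthogonal: ⟨ψ_b, ψ_c⟩ = 0 for all b ≠ c. Equivalently, a family of linearly independent but nonorthogonal vectors admits no resolution of the identity Σ_b α_b |ψ_b⟩⟨ψ_b| = I with positive coefficients α_b. -/
open Matrix
open scoped ComplexOrder

lemma sum_mulVec' {D : ℕ} (A : Fin D → Matrix (Fin D) (Fin D) ℂ) (x : Fin D → ℂ) :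
    (∑ b, A b) *ᵥ x = ∑ b, A b *ᵥ x := by
  ext i
  simp only [Matrix.mulVec, dotProduct, Finset.sum_apply, Matrix.sum_apply,
    Finset.sum_mul]
  rw [Finset.sum_comm]

lemma vecMulVec_mulVec' {D : ℕ} (w v x : Fin D → ℂ) :
    Matrix.vecMulVec w v *ᵥ x = (v ⬝ᵥ x) • w := by
  ext i
  simp [Matrix.mulVec, dotProduct, Matrix.vecMulVec_apply, Finset.mul_sum,
    mul_assoc, mul_comm, mul_left_comm]

/-- If linearly independent vectors `ψ_1, …, ψ_D` in `ℂ^D` admit a resolution of the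
identity `Σ_b α_b |ψ_b⟩⟨ψ_b| = I` with strictly positive coefficients `α_b`, then the
vectors `ψ_b` are mutually orthogonal. -/
theorem orthogonal_of_resolution_of_identity {D : ℕ}
    (ψ : Fin D → (Fin D → ℂ)) (α : Fin D → ℝ)
    (hli : LinearIndependent ℂ ψ) (hα : ∀ b, 0 < α b)
    (hsum : ∑ b, (α b : ℂ) • Matrix.vecMulVec (ψ b) (star (ψ b)) = 1) :
    ∀ b c, b ≠ c → star (ψ b) ⬝ᵥ ψ c = 0 := by
  intro b c hbc
  have h1 : (∑ b, (α b : ℂ) • Matrix.vecMulVec (ψ b) (star (ψ b))) *ᵥ ψ c = ψ c := by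
    rw [hsum, Matrix.one_mulVec]
  rw [sum_mulVec'] at h1
  have h2 : ∀ b, ((α b : ℂ) • Matrix.vecMulVec (ψ b) (star (ψ b))) *ᵥ ψ c
      = ((α b : ℂ) * (star (ψ b) ⬝ᵥ ψ c)) • ψ b := by
    intro b
    rw [Matrix.smul_mulVec, vecMulVec_mulVec', smul_smul]
  simp only [h2] at h1
  -- coefficients
  set g : Fin D → ℂ := fun b => (α b : ℂ) * (star (ψ b) ⬝ᵥ ψ c) - if b = c then 1 else 0
    with hg
  have h0 : ∑ b, g b • ψ b = 0 := by
    simp only [hg, sub_smul, Finset.sum_sub_distrib, h1, ite_smul, one_smul, zero_smul,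
      Finset.sum_ite_eq', Finset.mem_univ, if_true, sub_self]
  have := linearIndependent_iff'.mp hli Finset.univ g h0 b (Finset.mem_univ b)
  rw [hg] at this
  simp only [hbc, if_false, sub_zero] at this
  have hαb : (α b : ℂ) ≠ 0 := by
    exact_mod_cast (hα b).ne'
  exact (mul_eq_zero.mp this).resolve_left hαb
end
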